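/- Every semicommutative ring is strongly nil-IFP: if f(x)g(x) = 0 in R[x] with R semicommutative, then for every coefficient a of f, every coefficient b of g, and every r in R, the element arb is nilpotent. -/

import Mathlib

def StronglyNilIFP (R : Type*) [Ring R] : Prop :=
  ∀ f g : Polynomial R, f * g = 0 →
    ∀ i j : ℕ, ∀ r : R, IsNilpotent (f.coeff i * r * g.coeff j)

section Aux

variable {R : Type*} [Ring R]

private lemma aux_mul_pow_mul (y x : R) (n : ℕ) : (y * x) ^ (n + 1) = y * (x * y) ^ n * x := by
  induction n with
  | zero => simp
  | succ n ih =>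
    rw [pow_succ, ih, pow_succ]
    simp [mul_assoc]

private lemma aux_nilp_swap {x y : R} (h : IsNilpotent (x * y)) : IsNilpotent (y * x) := by
  obtain ⟨n, hn⟩ := h
  exact ⟨n + 1, by rw [aux_mul_pow_mul, hn, mul_zero, zero_mul]⟩

private lemma aux_insert_aux (hsc : ∀ a b : R, a * b = 0 → ∀ r : R, a * r * b = 0) (a b r : R) :
    ∀ m k : ℕ, (a * r * b) ^ k * (a * b) ^ m = 0 → (a * r * b) ^ (k + m) = 0 := by
  intro m
  induction m with
  | zero => intro k h; simpa using h
  | succ m ih =>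
    intro k h
    rw [pow_succ'] at h
    have h1 : ((a * r * b) ^ k * a) * (b * (a * b) ^ m) = 0 := by
      simpa [mul_assoc] using h
    have h2 := hsc _ _ h1 r
    have h3 : (a * r * b) ^ (k + 1) * (a * b) ^ m = 0 := by
      rw [pow_succ]
      simpa [mul_assoc] using h2
    have h4 := ih (k + 1) h3
    rwa [show k + (m + 1) = k + 1 + m from by omega]

private lemma aux_nil_insert (hsc : ∀ a b : R, a * b = 0 → ∀ r : R, a * r * b = 0) {a b : R} (r : R) (h : IsNilpotent (a * b)) :
    IsNilpotent (a * r * b) := by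
  obtain ⟨n, hn⟩ := h
  refine ⟨n, ?_⟩
  have := aux_insert_aux hsc a b r n 0 (by simpa using hn)
  simpa using this

private lemma aux_nil_mul_left (hsc : ∀ a b : R, a * b = 0 → ∀ r : R, a * r * b = 0) {x : R} (r : R) (h : IsNilpotent x) : IsNilpotent (r * x) := by
  have h1 : IsNilpotent ((1 : R) * x) := by simpa using h
  have := aux_nil_insert hsc r h1
  simpa using this

private lemma aux_nil_mul_right (hsc : ∀ a b : R, a * b = 0 → ∀ r : R, a * r * b = 0) {x : R} (r : R) (h : IsNilpotent x) : IsNilpotent (x * r) := by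
  have h1 : IsNilpotent (x * (1 : R)) := by simpa using h
  have := aux_nil_insert hsc r h1
  simpa using this

private lemma aux_sqrt {x : R} (h : IsNilpotent (x * x)) : IsNilpotent x := by
  obtain ⟨n, hn⟩ := h
  exact ⟨2 * n, by rw [pow_mul, pow_two, hn]⟩

private lemma aux_words (hsc : ∀ a b : R, a * b = 0 → ∀ r : R, a * r * b = 0) [DecidableEq R] (a : R) :
    ∀ (l : List R) (P : R) (j : ℕ), P * a ^ j = 0 → j ≤ l.count a → P * l.prod = 0 := by
  intro l
  induction l with
  | nil =>
    intro P j h hj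
    simp only [List.count_nil, Nat.le_zero] at hj
    subst hj
    simpa using h
  | cons z t ih =>
    intro P j h hj
    rcases j with _ | j
    · have hP : P = 0 := by simpa using h
      simp [hP]
    · by_cases hz : z = a
      · subst hz
        rw [pow_succ'] at h
        have h' : (P * z) * z ^ j = 0 := by simpa [mul_assoc] using h
        have hj' : j ≤ t.count z := by
          rw [List.count_cons_self] at hj; omega
        have := ih (P * z) j h' hj'
        simpa [mul_assoc] using this
      · have h' : (P * z) * a ^ (j + 1) = 0 := hsc _ _ h z
        have hj' : j + 1 ≤ t.count a := by
          rwa [List.count_cons_of_ne (by exact fun hh => hz hh)] at hj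
        have := ih (P * z) (j + 1) h' hj'
        simpa [mul_assoc] using this

private lemma aux_count_ab [DecidableEq R] (a b : R) :
    ∀ l : List R, (∀ z ∈ l, z = a ∨ z = b) → l.length ≤ l.count a + l.count b := by
  intro l
  induction l with
  | nil => simp
  | cons z t ih =>
    intro hl
    have ht := ih (fun z hz => hl z (List.mem_cons_of_mem _ hz))
    have hz : z = a ∨ z = b := hl z List.mem_cons_self
    rcases hz with rfl | rfl
    · rw [List.length_cons, List.count_cons_self, List.count_cons]
      split <;> omega
    · rw [List.length_cons, List.count_cons_self, List.count_cons]
      split <;> omega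

private lemma aux_nilp_add (hsc : ∀ a b : R, a * b = 0 → ∀ r : R, a * r * b = 0) {a b : R} (ha : IsNilpotent a) (hb : IsNilpotent b) :
    IsNilpotent (a + b) := by
  classical
  obtain ⟨n, hn⟩ := ha
  obtain ⟨m, hm⟩ := hb
  refine ⟨n + m, ?_⟩
  set S : ℕ → Set R :=
    fun N => {x : R | ∃ l : List R, l.length = N ∧ (∀ z ∈ l, z = a ∨ z = b) ∧ x = l.prod}
    with hS
  have hmul : ∀ c : R, (c = a ∨ c = b) → ∀ N : ℕ, ∀ x ∈ AddSubmonoid.closure (S N),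
      c * x ∈ AddSubmonoid.closure (S (N + 1)) := by
    intro c hc N x hx
    induction hx using AddSubmonoid.closure_induction with
    | mem y hy =>
      obtain ⟨l, hlen, hl, rfl⟩ := hy
      refine AddSubmonoid.subset_closure ⟨c :: l, by simp [hlen], ?_, by simp⟩
      intro z hz
      rcases List.mem_cons.mp hz with rfl | hz
      · exact hc
      · exact hl z hz
    | zero => simpa using AddSubmonoid.zero_mem _
    | add y z hy hz hy' hz' =>
      rw [mul_add]
      exact AddSubmonoid.add_mem _ hy' hz'
  have key : ∀ N : ℕ, (a + b) ^ N ∈ AddSubmonoid.closure (S N) := by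
    intro N
    induction N with
    | zero => exact AddSubmonoid.subset_closure ⟨[], by simp⟩
    | succ N ihN =>
      rw [pow_succ', add_mul]
      exact AddSubmonoid.add_mem _ (hmul a (Or.inl rfl) N _ ihN) (hmul b (Or.inr rfl) N _ ihN)
  have hzero : S (n + m) ⊆ (⊥ : AddSubmonoid R) := by
    rintro x ⟨l, hlen, hl, rfl⟩
    have hcount : n ≤ l.count a ∨ m ≤ l.count b := by
      by_contra hcon
      push_neg at hcon
      have := aux_count_ab a b l hl
      omega
    rw [SetLike.mem_coe, AddSubmonoid.mem_bot]
    rcases hcount with hca | hcb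
    · have := aux_words hsc a l 1 n (by simpa using hn) hca
      simpa using this
    · have := aux_words hsc b l 1 m (by simpa using hm) hcb
      simpa using this
  have := (AddSubmonoid.closure_le.mpr hzero) (key (n + m))
  rwa [AddSubmonoid.mem_bot] at this

private lemma aux_nilp_sum (hsc : ∀ a b : R, a * b = 0 → ∀ r : R, a * r * b = 0) {ι : Type*} (s : Finset ι) (f : ι → R)
    (h : ∀ i ∈ s, IsNilpotent (f i)) : IsNilpotent (∑ i ∈ s, f i) :=
  Finset.sum_induction f IsNilpotent (fun _ _ => aux_nilp_add hsc) IsNilpotent.zero h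

end Aux

theorem semicommutative_stronglyNilIFP (R : Type*) [Ring R]
    (hsc : ∀ a b : R, a * b = 0 → ∀ r : R, a * r * b = 0) :
    StronglyNilIFP R := by
  intro f g hfg i j r
  suffices h : IsNilpotent (f.coeff i * g.coeff j) by
    exact aux_nil_insert hsc r h
  have hco : ∀ k : ℕ, ∑ p ∈ Finset.HasAntidiagonal.antidiagonal k, f.coeff p.1 * g.coeff p.2 = 0 := by
    intro k
    have h1 := Polynomial.coeff_mul f g k
    rw [hfg, Polynomial.coeff_zero] at h1
    exact h1.symm
  have main : ∀ k : ℕ, ∀ j i : ℕ, i + j = k → IsNilpotent (f.coeff i * g.coeff j) := by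
    intro k
    induction k using Nat.strong_induction_on with
    | _ k IH =>
      intro j
      induction j using Nat.strong_induction_on with
      | _ j IHj =>
        intro i hij
        set a : ℕ → R := fun p => f.coeff p with ha
        set b : ℕ → R := fun q => g.coeff q with hb
        have hmem : (i, j) ∈ Finset.HasAntidiagonal.antidiagonal k := by
          rw [Finset.HasAntidiagonal.mem_antidiagonal]; exact hij
        have hSb : ∑ p ∈ Finset.HasAntidiagonal.antidiagonal k, b j * (a p.1 * b p.2) = 0 := by
          rw [← Finset.mul_sum, hco k, mul_zero]
        have hrest : b j * (a i * b j) =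
            -∑ p ∈ (Finset.HasAntidiagonal.antidiagonal k).erase (i, j), b j * (a p.1 * b p.2) := by
          have h2 := Finset.add_sum_erase _ (fun p : ℕ × ℕ => b j * (a p.1 * b p.2)) hmem
          rw [hSb] at h2
          exact eq_neg_of_add_eq_zero_left h2
        have hterm : ∀ p ∈ (Finset.HasAntidiagonal.antidiagonal k).erase (i, j),
            IsNilpotent (b j * (a p.1 * b p.2)) := by
          rintro ⟨p, q⟩ hp
          have hpq : p + q = k := Finset.HasAntidiagonal.mem_antidiagonal.mp (Finset.mem_of_mem_erase hp)
          have hne : (p, q) ≠ (i, j) := Finset.ne_of_mem_erase hp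
          rcases lt_trichotomy q j with hq | hq | hq
          · exact aux_nil_mul_left hsc _ (IHj q hq p (by omega))
          · exfalso; apply hne; subst hq; simp [show p = i from by omega]
          · have hlt : p + j < k := by omega
            have h3 : IsNilpotent (a p * b j) := IH (p + j) hlt j p rfl
            have h4 : IsNilpotent (b j * a p) := aux_nilp_swap h3
            have h5 := aux_nil_mul_right hsc (b q) h4
            simpa [mul_assoc] using h5
        have h6 : IsNilpotent (b j * (a i * b j)) := by
          rw [hrest]
          exact IsNilpotent.neg (aux_nilp_sum hsc _ _ hterm)
        have h7 : IsNilpotent ((a i * b j) * (a i * b j)) := by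
          have := aux_nil_mul_left hsc (a i) h6
          simpa [mul_assoc] using this
        exact aux_sqrt h7
  exact main (i + j) j i rfl
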